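/- There exist constants K, K' such that for all t, x > 0 with t ≠ x: R_α(t,x)² ≤ K/(x−t)² + K'/(x²−t²)². -/

import Mathlib

open MeasureTheory Real

/-- Bessel function of the first kind of order `α`, defined by its power series. -/
noncomputable def besselJ (α x : ℝ) : ℝ :=
  ∑' n : ℕ, ((-1 : ℝ) ^ n / (n.factorial * Real.Gamma (n + α + 1))) *
    (x / 2) ^ ((2 * n : ℝ) + α)

/-- The kernel `w_X(t,x) = ∫_X J_α(ts) J_α(xs) (tx)^{1/2} s ds`. -/
noncomputable def kernelW (α : ℝ) (X : Set ℝ) (t x : ℝ) : ℝ :=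
  ∫ s in X, besselJ α (t * s) * besselJ α (x * s) * Real.sqrt (t * x) * s

/-- The reproducing kernel `R_α = w_{[0,1]}`. -/
noncomputable def Rker (α : ℝ) (t x : ℝ) : ℝ := kernelW α (Set.Icc 0 1) t x

set_option linter.unusedSectionVars false

namespace BesselAux
open Filter FormalMultilinearSeries Set
section


lemma tendsto_inv_shift_mul (a b : ℝ) :
    Tendsto (fun n : ℕ => 1 / (((n : ℝ) + a) * ((n : ℝ) + b))) atTop (nhds 0) := by
  have := ((tendsto_atTop_add_const_right atTop a tendsto_natCast_atTop_atTop).atTop_mul_atTop₀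
    (tendsto_atTop_add_const_right atTop b tendsto_natCast_atTop_atTop)).inv_tendsto_atTop
  simpa [Pi.inv_def, one_div, mul_comm] using this

/-- Ratio-test summability for coefficients with `c (n+1) = - c n / ((n+1)(n+β))`. -/
lemma summable_of_rec {c : ℕ → ℝ} {β : ℝ} (hβ : 0 < β)
    (hc0 : ∀ n, c n ≠ 0)
    (hrec : ∀ n : ℕ, (((n : ℝ) + 1) * ((n : ℝ) + β)) * c (n + 1) = - c n) (r : ℝ) :
    Summable fun n => |c n| * |r| ^ n := by
  have hrec' : ∀ n : ℕ, c (n + 1) = - c n / (((n : ℝ) + 1) * ((n : ℝ) + β)) := by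
    intro n
    have hpos : 0 < ((n : ℝ) + 1) * ((n : ℝ) + β) := by positivity
    rw [eq_div_iff (ne_of_gt hpos), mul_comm]
    exact hrec n
  rcases eq_or_ne r 0 with h | h
  · apply summable_of_ne_finset_zero (s := {0})
    intro n hn
    have : n ≠ 0 := by simpa using hn
    simp [h, zero_pow this]
  · have hr : |r| ≠ 0 := abs_ne_zero.mpr h
    apply summable_of_ratio_test_tendsto_lt_one zero_lt_one
    · exact Eventually.of_forall fun n =>
        mul_ne_zero (abs_ne_zero.mpr (hc0 n)) (pow_ne_zero _ hr)
    · have key : ∀ n : ℕ, ‖|c (n+1)| * |r| ^ (n+1)‖ / ‖|c n| * |r| ^ n‖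
          = (1 / (((n : ℝ) + 1) * ((n : ℝ) + β))) * |r| := by
        intro n
        have hcn : |c n| ≠ 0 := abs_ne_zero.mpr (hc0 n)
        have hpos : 0 < ((n : ℝ) + 1) * ((n : ℝ) + β) := by positivity
        rw [hrec' n]
        rw [norm_of_nonneg (by positivity), norm_of_nonneg (by positivity)]
        rw [abs_div, abs_neg, abs_of_pos hpos, pow_succ]
        field_simp
      simp only [key]
      have := (tendsto_inv_shift_mul 1 β).mul_const |r|
      simpa using this

lemma summable_term {c : ℕ → ℝ} (h : ∀ r : ℝ, Summable fun n => |c n| * |r| ^ n) (z : ℝ) :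
    Summable fun n => c n * z ^ n := by
  apply Summable.of_norm
  have := h z
  simpa [abs_mul, abs_pow] using this

lemma radius_top {c : ℕ → ℝ} (h : ∀ r : ℝ, Summable fun n => |c n| * |r| ^ n) :
    (ofScalars ℝ c).radius = ⊤ := by
  apply radius_eq_top_of_summable_norm
  intro r
  have h2 := h (r : ℝ)
  rw [abs_of_nonneg r.coe_nonneg] at h2
  refine (summable_congr ?_).mpr h2
  intro n
  rw [ofScalars_norm, Real.norm_eq_abs]

lemma sum_eq {c : ℕ → ℝ} (x : ℝ) : (ofScalars ℝ c).sum x = ∑' n, c n * x ^ n := by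
  unfold FormalMultilinearSeries.sum
  congr 1
  funext n
  rw [ofScalars_apply_eq]
  simp [smul_eq_mul]

lemma hasFPS {c : ℕ → ℝ} (h : ∀ r : ℝ, Summable fun n => |c n| * |r| ^ n) :
    HasFPowerSeriesOnBall (ofScalars ℝ c).sum (ofScalars ℝ c) 0 ⊤ := by
  have := (ofScalars ℝ c).hasFPowerSeriesOnBall (by rw [radius_top h]; exact ENNReal.zero_lt_top)
  rwa [radius_top h] at this

lemma continuous_tsum_pow {c : ℕ → ℝ} (h : ∀ r : ℝ, Summable fun n => |c n| * |r| ^ n) :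
    Continuous fun z : ℝ => ∑' n, c n * z ^ n := by
  have h1 : (fun z : ℝ => ∑' n, c n * z ^ n) = (ofScalars ℝ c).sum := by
    funext x; rw [sum_eq]
  rw [h1]
  have := (hasFPS h).continuousOn
  have huniv : Metric.eball (0:ℝ) ⊤ = Set.univ := by
    ext y; simp
  rw [huniv] at this
  exact continuousOn_univ.mp this

lemma hasDerivAt_tsum_pow {c : ℕ → ℝ} (h : ∀ r : ℝ, Summable fun n => |c n| * |r| ^ n)
    {z : ℝ} (hz : z ≠ 0) :
    HasDerivAt (fun y => ∑' n, c n * y ^ n) (∑' (n : ℕ), ((n : ℝ) + 1) * c (n + 1) * z ^ n) z := by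
  have h1 : (fun y : ℝ => ∑' n, c n * y ^ n) = (ofScalars ℝ c).sum := by
    funext x; rw [sum_eq]
  rw [h1]
  have hball := hasFPS h
  have hmem : z ∈ Metric.eball (0 : ℝ) ⊤ := by simp
  have hda : DifferentiableAt ℝ (ofScalars ℝ c).sum z := by
    have := hball.analyticOnNhd z hmem
    exact this.differentiableAt
  have hd := hball.fderiv
  have hs := hd.hasSum hmem
  rw [zero_add] at hs
  have hs2 := hs.mapL (ContinuousLinearMap.apply ℝ ℝ z)
  simp only [ContinuousLinearMap.apply_apply] at hs2
  have hterm : ∀ n : ℕ, (ofScalars ℝ c).derivSeries n (fun _ => z) z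
      = z * (((n : ℝ) + 1) * c (n + 1) * z ^ n) := by
    intro n
    rw [derivSeries_apply_diag]
    rw [ofScalars_apply_eq]
    simp only [smul_eq_mul, nsmul_eq_mul]
    push_cast
    ring
  simp only [hterm] at hs2
  have hfd : fderiv ℝ (ofScalars ℝ c).sum z z = z * deriv (ofScalars ℝ c).sum z := by
    have : fderiv ℝ (ofScalars ℝ c).sum z z = fderiv ℝ (ofScalars ℝ c).sum z (z • 1) := by
      norm_num
    rw [this, ContinuousLinearMap.map_smul, fderiv_apply_one_eq_deriv]
    simp [smul_eq_mul]
  rw [hfd] at hs2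
  have hsum2 : HasSum (fun n : ℕ => ((n : ℝ) + 1) * c (n + 1) * z ^ n)
      (deriv (ofScalars ℝ c).sum z) := by
    have h3 := hs2.tsum_eq
    rw [tsum_mul_left] at h3
    have h4 : deriv (ofScalars ℝ c).sum z = ∑' (n : ℕ), ((n : ℝ) + 1) * c (n + 1) * z ^ n :=
      mul_left_cancel₀ hz h3.symm
    rw [h4] at hs2 ⊢
    have : Summable fun n : ℕ => ((n : ℝ) + 1) * c (n + 1) * z ^ n := by
      have h5 := hs2.summable
      have := h5.mul_left z⁻¹
      simpa [mul_assoc, inv_mul_cancel_left₀ hz] using this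
    exact this.hasSum
  have := hda.hasDerivAt
  rwa [hsum2.tsum_eq]


end
section



noncomputable def c0 (α : ℝ) (n : ℕ) : ℝ :=
  (-1 : ℝ) ^ n / (n.factorial * Real.Gamma ((n : ℝ) + α + 1))
noncomputable def c1 (α : ℝ) (n : ℕ) : ℝ := ((n : ℝ) + 1) * c0 α (n + 1)
noncomputable def c2 (α : ℝ) (n : ℕ) : ℝ := ((n : ℝ) + 1) * c1 α (n + 1)

noncomputable def fA (α : ℝ) (z : ℝ) : ℝ := ∑' n : ℕ, c0 α n * z ^ n
noncomputable def fB (α : ℝ) (z : ℝ) : ℝ := ∑' n : ℕ, c1 α n * z ^ n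
noncomputable def fC (α : ℝ) (z : ℝ) : ℝ := ∑' n : ℕ, c2 α n * z ^ n

variable {α : ℝ} (hα : -(1 / 2 : ℝ) < α)

section
include hα

lemma arg_pos (n : ℕ) : (0 : ℝ) < (n : ℝ) + α + 1 := by
  have : (0:ℝ) ≤ (n:ℝ) := Nat.cast_nonneg n
  linarith

lemma gamma_pos (n : ℕ) : 0 < Real.Gamma ((n : ℝ) + α + 1) :=
  Real.Gamma_pos_of_pos (arg_pos hα n)

lemma c0_ne (n : ℕ) : c0 α n ≠ 0 := by
  unfold c0
  apply div_ne_zero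
  · exact pow_ne_zero _ (by norm_num)
  · exact mul_ne_zero (Nat.cast_ne_zero.mpr n.factorial_ne_zero) (ne_of_gt (gamma_pos hα n))

lemma c0_rec (n : ℕ) :
    (((n : ℝ) + 1) * ((n : ℝ) + (α + 1))) * c0 α (n + 1) = - c0 α n := by
  unfold c0
  have hg : Real.Gamma ((↑(n+1) : ℝ) + α + 1) = ((n:ℝ) + α + 1) * Real.Gamma ((n:ℝ) + α + 1) := by
    have h1 : ((↑(n+1) : ℝ) + α + 1) = ((n:ℝ) + α + 1) + 1 := by push_cast; ring
    rw [h1, Real.Gamma_add_one (ne_of_gt (arg_pos hα n))]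
  have hfac : ((n+1).factorial : ℝ) = ((n:ℝ)+1) * (n.factorial : ℝ) := by
    rw [Nat.factorial_succ]; push_cast; ring
  rw [hg, hfac, pow_succ]
  set G := Real.Gamma ((n:ℝ) + α + 1) with hG
  set F := (n.factorial : ℝ) with hF
  have h2 : F ≠ 0 := Nat.cast_ne_zero.mpr n.factorial_ne_zero
  have h3 : G ≠ 0 := ne_of_gt (gamma_pos hα n)
  have h4 : ((n:ℝ)+1) ≠ 0 := by positivity
  have h5 : ((n:ℝ) + α + 1) ≠ 0 := ne_of_gt (arg_pos hα n)
  field_simp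
  ring

lemma c1_ne (n : ℕ) : c1 α n ≠ 0 := by
  unfold c1
  exact mul_ne_zero (by positivity) (c0_ne hα _)

lemma c2_ne (n : ℕ) : c2 α n ≠ 0 := by
  unfold c2
  exact mul_ne_zero (by positivity) (c1_ne hα _)

lemma c1_rec (n : ℕ) :
    (((n : ℝ) + 1) * ((n : ℝ) + (α + 2))) * c1 α (n + 1) = - c1 α n := by
  have h := c0_rec hα (n + 1)
  unfold c1
  push_cast at h ⊢
  have expand : (((n:ℝ) + 1) * ((n:ℝ) + (α + 2))) * (((n:ℝ)+1+1) * c0 α (n+1+1))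
      = ((n:ℝ)+1) * (((n:ℝ)+1+1) * (((n:ℝ)+1) + (α + 1)) * c0 α (n+1+1)) := by ring
  rw [expand, h]
  ring

lemma c2_rec (n : ℕ) :
    (((n : ℝ) + 1) * ((n : ℝ) + (α + 3))) * c2 α (n + 1) = - c2 α n := by
  have h := c1_rec hα (n + 1)
  unfold c2
  push_cast at h ⊢
  have expand : (((n:ℝ) + 1) * ((n:ℝ) + (α + 3))) * (((n:ℝ)+1+1) * c1 α (n+1+1))
      = ((n:ℝ)+1) * (((n:ℝ)+1+1) * (((n:ℝ)+1) + (α + 2)) * c1 α (n+1+1)) := by ring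
  rw [expand, h]
  ring

lemma S0 (r : ℝ) : Summable fun n => |c0 α n| * |r| ^ n :=
  summable_of_rec (by linarith) (c0_ne hα) (c0_rec hα) r

lemma S1 (r : ℝ) : Summable fun n => |c1 α n| * |r| ^ n :=
  summable_of_rec (by linarith) (c1_ne hα) (c1_rec hα) r

lemma S2 (r : ℝ) : Summable fun n => |c2 α n| * |r| ^ n :=
  summable_of_rec (by linarith) (c2_ne hα) (c2_rec hα) r

lemma hasSum_fA (z : ℝ) : HasSum (fun n : ℕ => c0 α n * z ^ n) (fA α z) :=
  (summable_term (S0 hα) z).hasSum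
lemma hasSum_fB (z : ℝ) : HasSum (fun n : ℕ => c1 α n * z ^ n) (fB α z) :=
  (summable_term (S1 hα) z).hasSum
lemma hasSum_fC (z : ℝ) : HasSum (fun n : ℕ => c2 α n * z ^ n) (fC α z) :=
  (summable_term (S2 hα) z).hasSum

lemma fA_cont : Continuous (fA α) := continuous_tsum_pow (S0 hα)
lemma fB_cont : Continuous (fB α) := continuous_tsum_pow (S1 hα)
lemma fC_cont : Continuous (fC α) := continuous_tsum_pow (S2 hα)

lemma fA_deriv {z : ℝ} (hz : z ≠ 0) : HasDerivAt (fA α) (fB α z) z := by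
  have h := hasDerivAt_tsum_pow (S0 hα) hz
  have he : fB α z = ∑' (n : ℕ), ((n : ℝ) + 1) * c0 α (n + 1) * z ^ n := by
    unfold fB c1; exact tsum_congr fun n => by ring
  rw [he]
  exact h

lemma fB_deriv {z : ℝ} (hz : z ≠ 0) : HasDerivAt (fB α) (fC α z) z := by
  have h := hasDerivAt_tsum_pow (S1 hα) hz
  have he : fC α z = ∑' (n : ℕ), ((n : ℝ) + 1) * c1 α (n + 1) * z ^ n := by
    unfold fC c2; exact tsum_congr fun n => by ring
  rw [he]
  exact h

/-- The series-level Bessel ODE identity. -/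
lemma key_identity (z : ℝ) : z * fC α z + (α + 1) * fB α z + fA α z = 0 := by
  have h1 : HasSum (fun n : ℕ => c2 α n * z ^ n * z) (fC α z * z) :=
    (hasSum_fC hα z).mul_right z
  set g : ℕ → ℝ := fun n => (n : ℝ) * c1 α n * z ^ n with hg
  have hfun : (fun n : ℕ => g (n + 1)) = fun n : ℕ => c2 α n * z ^ n * z := by
    funext n
    simp only [hg, c2]
    push_cast
    rw [pow_succ]
    ring
  have h1' : HasSum (fun n : ℕ => g (n + 1)) (fC α z * z) := by rw [hfun]; exact h1
  have h2 : HasSum g (fC α z * z) := by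
    have := (hasSum_nat_add_iff (f := g) 1).mp h1'
    simpa [hg] using this
  have h3 : HasSum (fun n : ℕ => (α + 1) * (c1 α n * z ^ n)) ((α + 1) * fB α z) :=
    (hasSum_fB hα z).mul_left _
  have h4 := hasSum_fA hα z
  have total := (h2.add h3).add h4
  have hzero : (fun n : ℕ => g n + (α + 1) * (c1 α n * z ^ n) + c0 α n * z ^ n)
      = fun _ => (0 : ℝ) := by
    funext n
    have hrec := c0_rec hα n
    have hexp : g n + (α + 1) * (c1 α n * z ^ n) + c0 α n * z ^ n
        = ((((n:ℝ) + 1) * ((n:ℝ) + (α + 1))) * c0 α (n+1) + c0 α n) * z ^ n := by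
      simp only [hg, c1]; ring
    rw [hexp, hrec]; ring
  rw [hzero] at total
  have hS := hasSum_zero.unique total
  rw [mul_comm z (fC α z)]
  linarith

end

end
section


variable {α : ℝ} (hα : -(1 / 2 : ℝ) < α)


/-- J, its first derivative, and second derivative (explicit formulas valid for `y > 0`). -/
noncomputable def Jf (α y : ℝ) : ℝ := (y / 2) ^ α * fA α (y ^ 2 / 4)

noncomputable def Jd (α y : ℝ) : ℝ :=
  (y / 2) ^ α * ((α / y) * fA α (y ^ 2 / 4) + (y / 2) * fB α (y ^ 2 / 4))

noncomputable def Jd2 (α y : ℝ) : ℝ :=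
  α / y * (y / 2) ^ α * ((α / y) * fA α (y ^ 2 / 4) + (y / 2) * fB α (y ^ 2 / 4)) +
    (y / 2) ^ α *
      ((-(α / y ^ 2) * fA α (y ^ 2 / 4) + α / y * (fB α (y ^ 2 / 4) * (y / 2))) +
        (1 / 2 * fB α (y ^ 2 / 4) + y / 2 * (fC α (y ^ 2 / 4) * (y / 2))))

section
include hα

lemma besselJ_eq {y : ℝ} (hy : 0 < y) : besselJ α y = Jf α y := by
  unfold besselJ Jf
  have h2 : (0:ℝ) < y / 2 := by linarith
  have hterm : ∀ n : ℕ, ((-1 : ℝ) ^ n / (n.factorial * Real.Gamma (n + α + 1))) *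
      (y / 2) ^ ((2 * n : ℝ) + α) = (c0 α n * (y ^ 2 / 4) ^ n) * (y / 2) ^ α := by
    intro n
    have e1 : (y / 2 : ℝ) ^ ((2 * n : ℝ) + α) = (y/2) ^ (2*(n:ℝ)) * (y/2) ^ α :=
      Real.rpow_add h2 _ _
    have e2 : (y/2 : ℝ) ^ (2*(n:ℝ)) = ((y/2) ^ 2) ^ n := by
      rw [show (2*(n:ℝ)) = ((2*n : ℕ) : ℝ) by push_cast; ring, Real.rpow_natCast, pow_mul]
    have e3 : ((y/2 : ℝ)) ^ 2 = y ^ 2 / 4 := by ring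
    rw [e1, e2, e3]
    unfold c0
    ring
  rw [tsum_congr hterm, tsum_mul_right]
  exact mul_comm _ _

lemma hQ {y : ℝ} (hy : 0 < y) :
    HasDerivAt (fun y : ℝ => (y / 2) ^ α) (α / y * (y / 2) ^ α) y := by
  have h2 : (0:ℝ) < y / 2 := by linarith
  have h := ((hasDerivAt_id y).div_const 2).rpow_const (p := α) (Or.inl (ne_of_gt h2))
  simp only [id_eq] at h
  convert h using 1
  rw [Real.rpow_sub h2, Real.rpow_one]
  field_simp

omit hα in
lemma hw {y : ℝ} : HasDerivAt (fun y : ℝ => y ^ 2 / 4) (y / 2) y := by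
  have h := (hasDerivAt_pow 2 y).div_const 4
  refine h.congr_deriv ?_
  norm_num
  ring

omit hα in
lemma hwne {y : ℝ} (hy : 0 < y) : y ^ 2 / 4 ≠ 0 := by positivity

lemma hAcomp {y : ℝ} (hy : 0 < y) :
    HasDerivAt (fun y : ℝ => fA α (y ^ 2 / 4)) (fB α (y ^ 2 / 4) * (y / 2)) y :=
  HasDerivAt.comp y (fA_deriv hα (hwne hy)) hw

lemma hBcomp {y : ℝ} (hy : 0 < y) :
    HasDerivAt (fun y : ℝ => fB α (y ^ 2 / 4)) (fC α (y ^ 2 / 4) * (y / 2)) y :=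
  HasDerivAt.comp y (fB_deriv hα (hwne hy)) hw

lemma Jf_hasDeriv {y : ℝ} (hy : 0 < y) : HasDerivAt (Jf α) (Jd α y) y := by
  have h := (hQ hα hy).mul (hAcomp hα hy)
  have he : Jd α y = α / y * (y / 2) ^ α * fA α (y ^ 2 / 4) +
      (y / 2) ^ α * (fB α (y ^ 2 / 4) * (y / 2)) := by
    unfold Jd; ring
  rw [he]
  exact h

lemma Jd_hasDeriv {y : ℝ} (hy : 0 < y) : HasDerivAt (Jd α) (Jd2 α y) y := by
  have hyne : y ≠ 0 := ne_of_gt hy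
  have h1 : HasDerivAt (fun y : ℝ => α / y) (-(α / y ^ 2)) y := by
    have := (hasDerivAt_inv hyne).const_mul α
    simp only [div_eq_mul_inv]
    refine this.congr_deriv ?_
    field_simp
  have hpart1 : HasDerivAt (fun y : ℝ => (α / y) * fA α (y ^ 2 / 4))
      (-(α / y ^ 2) * fA α (y ^ 2 / 4) + α / y * (fB α (y ^ 2 / 4) * (y / 2))) y :=
    h1.mul (hAcomp hα hy)
  have hpart2 : HasDerivAt (fun y : ℝ => (y / 2) * fB α (y ^ 2 / 4))
      (1 / 2 * fB α (y ^ 2 / 4) + y / 2 * (fC α (y ^ 2 / 4) * (y / 2))) y := by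
    have hid : HasDerivAt (fun y : ℝ => y / 2) (1 / 2) y := by
      simpa using (hasDerivAt_id y).div_const 2
    exact hid.mul (hBcomp hα hy)
  have hG := hpart1.add hpart2
  have h := (hQ hα hy).mul hG
  unfold Jd Jd2
  exact h

/-- The Bessel ODE. -/
lemma bessel_ODE {y : ℝ} (hy : 0 < y) :
    y ^ 2 * Jd2 α y + y * Jd α y + (y ^ 2 - α ^ 2) * Jf α y = 0 := by
  have hki := key_identity hα (y ^ 2 / 4)
  have hyne : y ≠ 0 := ne_of_gt hy
  unfold Jf Jd Jd2
  set q := (y / 2 : ℝ) ^ α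
  set a := fA α (y ^ 2 / 4)
  set b := fB α (y ^ 2 / 4)
  set c := fC α (y ^ 2 / 4)
  have hexp : y ^ 2 * (α / y * q * (α / y * a + y / 2 * b) +
      q * ((-(α / y ^ 2) * a + α / y * (b * (y / 2))) + (1 / 2 * b + y / 2 * (c * (y / 2))))) +
      y * (q * (α / y * a + y / 2 * b)) + (y ^ 2 - α ^ 2) * (q * a)
      = q * y ^ 2 * (y ^ 2 / 4 * c + (α + 1) * b + a) := by
    field_simp
    ring
  rw [hexp, hki, mul_zero]

end

end
section


-- axioms standing for previous parts
variable {α : ℝ} (hα : -(1 / 2 : ℝ) < α)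


/-- `u = √y J`, and its derivative `ud`. -/
noncomputable def uf (α y : ℝ) : ℝ := Real.sqrt y * Jf α y
noncomputable def ud (α y : ℝ) : ℝ :=
  1 / (2 * Real.sqrt y) * Jf α y + Real.sqrt y * Jd α y

section
include hα

lemma uf_hasDeriv {y : ℝ} (hy : 0 < y) : HasDerivAt (uf α) (ud α y) y := by
  have h := (Real.hasDerivAt_sqrt (ne_of_gt hy)).mul (Jf_hasDeriv hα hy)
  exact h

lemma ud_hasDeriv {y : ℝ} (hy : 0 < y) :
    HasDerivAt (ud α) (-(1 + (1 / 4 - α ^ 2) / y ^ 2) * uf α y) y := by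
  have hs : (0:ℝ) < Real.sqrt y := Real.sqrt_pos.mpr hy
  have hs0 : Real.sqrt y ≠ 0 := ne_of_gt hs
  have h2s0 : 2 * Real.sqrt y ≠ 0 := by positivity
  have h1 : HasDerivAt (fun y : ℝ => 1 / (2 * Real.sqrt y))
      (-(2 * (1 / (2 * Real.sqrt y))) / (2 * Real.sqrt y) ^ 2) y := by
    have hinner : HasDerivAt (fun y : ℝ => 2 * Real.sqrt y)
        (2 * (1 / (2 * Real.sqrt y))) y := (Real.hasDerivAt_sqrt (ne_of_gt hy)).const_mul 2
    have := hinner.inv h2s0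
    simpa only [one_div, Pi.inv_def] using this
  have hpart1 := h1.mul (Jf_hasDeriv hα hy)
  have hpart2 := (Real.hasDerivAt_sqrt (ne_of_gt hy)).mul (Jd_hasDeriv hα hy)
  have h := hpart1.add hpart2
  have hODE := bessel_ODE hα hy
  have hsy : Real.sqrt y ^ 2 = y := Real.sq_sqrt hy.le
  refine h.congr_deriv ?_
  set s := Real.sqrt y with hsdef
  rw [← hsy] at hODE ⊢
  have hC : Jd2 α (s ^ 2) =
      (-(s ^ 2 * Jd α (s ^ 2)) - ((s ^ 2) ^ 2 - α ^ 2) * Jf α (s ^ 2)) / (s ^ 2) ^ 2 := by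
    field_simp at hODE ⊢
    linarith
  unfold uf
  rw [Real.sqrt_sq hs.le, hC]
  field_simp
  ring

/-- The energy and the Gronwall-corrected energy. -/
noncomputable def En (α y : ℝ) : ℝ := (ud α y) ^ 2 + (uf α y) ^ 2
noncomputable def Phi (α y : ℝ) : ℝ := En α y * Real.exp (|1 / 4 - α ^ 2| / y)

lemma Phi_deriv_nonpos {y : ℝ} (hy : 0 < y) :
    ∃ d ≤ 0, HasDerivAt (Phi α) d y := by
  set k := |1 / 4 - α ^ 2| with hk
  have hk0 : 0 ≤ k := abs_nonneg _
  have hu := uf_hasDeriv hα hy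
  have hud := ud_hasDeriv hα hy
  have hE : HasDerivAt (En α)
      (2 * ud α y * (-(1 + (1 / 4 - α ^ 2) / y ^ 2) * uf α y) + 2 * uf α y * ud α y) y := by
    have h1 := hud.pow 2
    have h2 := hu.pow 2
    have := h1.add h2
    unfold En
    refine this.congr_deriv ?_
    push_cast
    ring
  have hexp : HasDerivAt (fun y : ℝ => Real.exp (k / y)) (Real.exp (k / y) * (-(k / y ^ 2))) y := by
    have hin : HasDerivAt (fun y : ℝ => k / y) (-(k / y ^ 2)) y := by
      have := (hasDerivAt_inv (ne_of_gt hy)).const_mul k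
      simp only [div_eq_mul_inv]
      refine this.congr_deriv ?_
      field_simp
    exact hin.exp
  have hPhi := hE.mul hexp
  refine ⟨_, ?_, hPhi⟩
  -- show the derivative is ≤ 0
  have hexp_pos : 0 < Real.exp (k / y) := Real.exp_pos _
  have hy2 : (0:ℝ) < y ^ 2 := by positivity
  have habs : 2 * |ud α y * uf α y| ≤ (ud α y) ^ 2 + (uf α y) ^ 2 := by
    nlinarith [sq_nonneg (|ud α y| - |uf α y|), abs_mul (ud α y) (uf α y),
      sq_abs (ud α y), sq_abs (uf α y)]
  have hEnonneg : 0 ≤ En α y := by unfold En; positivity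
  -- derivative = exp * (E' - k E / y^2) where E' = -2 c u ud / y^2, c = 1/4 - α^2
  have hc_le : |1 / 4 - α ^ 2| = k := rfl
  have key : (2 * ud α y * (-(1 + (1 / 4 - α ^ 2) / y ^ 2) * uf α y) + 2 * uf α y * ud α y)
      * Real.exp (k / y) + En α y * (Real.exp (k / y) * (-(k / y ^ 2))) ≤ 0 := by
    have hE' : 2 * ud α y * (-(1 + (1 / 4 - α ^ 2) / y ^ 2) * uf α y) + 2 * uf α y * ud α y
        = -(2 * (1 / 4 - α ^ 2) * (uf α y * ud α y)) / y ^ 2 := by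
      field_simp
      ring
    rw [hE']
    have h1 : -(2 * (1 / 4 - α ^ 2) * (uf α y * ud α y)) ≤ k * En α y := by
      have : |(-(2 * (1 / 4 - α ^ 2) * (uf α y * ud α y)))| ≤ k * En α y := by
        rw [abs_neg, abs_mul, abs_mul]
        unfold En
        have h2 : |uf α y * ud α y| = |ud α y * uf α y| := by rw [abs_mul, abs_mul]; ring
        calc |2| * |1 / 4 - α ^ 2| * |uf α y * ud α y|
            = k * (2 * |ud α y * uf α y|) := by rw [h2]; simp [abs_of_nonneg]; rw [hk]; ring
          _ ≤ k * ((ud α y) ^ 2 + (uf α y) ^ 2) := by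
              apply mul_le_mul_of_nonneg_left habs hk0
      linarith [le_abs_self (-(2 * (1 / 4 - α ^ 2) * (uf α y * ud α y)))]
    calc -(2 * (1 / 4 - α ^ 2) * (uf α y * ud α y)) / y ^ 2 * Real.exp (k / y)
        + En α y * (Real.exp (k / y) * (-(k / y ^ 2)))
        = (-(2 * (1 / 4 - α ^ 2) * (uf α y * ud α y)) - k * En α y) * (Real.exp (k / y) / y ^ 2) := by
          field_simp; ring
      _ ≤ 0 := by
          apply mul_nonpos_of_nonpos_of_nonneg
          · linarith
          · positivity
  exact key

end

end
section


variable {α : ℝ} (hα : -(1 / 2 : ℝ) < α)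


section
include hα

lemma Phi_anti : AntitoneOn (Phi α) (Set.Ici 1) := by
  apply antitoneOn_of_deriv_nonpos (convex_Ici 1)
  · intro y hy
    have hy0 : (0:ℝ) < y := lt_of_lt_of_le one_pos (by exact hy)
    obtain ⟨d, _, hPhi⟩ := Phi_deriv_nonpos hα hy0
    exact hPhi.continuousAt.continuousWithinAt
  · intro y hy
    rw [interior_Ici] at hy
    have hy0 : (0:ℝ) < y := lt_trans one_pos hy
    obtain ⟨d, hd, hPhi⟩ := Phi_deriv_nonpos hα hy0
    exact hPhi.differentiableAt.differentiableWithinAt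
  · intro y hy
    rw [interior_Ici] at hy
    have hy0 : (0:ℝ) < y := lt_trans one_pos hy
    obtain ⟨d, hd, hPhi⟩ := Phi_deriv_nonpos hα hy0
    rw [hPhi.deriv]
    exact hd

lemma En_le_Phi {y : ℝ} (hy : 0 < y) : En α y ≤ Phi α y := by
  unfold Phi
  have h1 : (1:ℝ) ≤ Real.exp (|1 / 4 - α ^ 2| / y) := by
    rw [Real.one_le_exp_iff]
    positivity
  have h0 : 0 ≤ En α y := by unfold En; positivity
  nlinarith

lemma energy_bound {y : ℝ} (hy : 1 ≤ y) :
    (uf α y) ^ 2 ≤ Phi α 1 ∧ (ud α y) ^ 2 ≤ Phi α 1 := by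
  have hy0 : (0:ℝ) < y := lt_of_lt_of_le one_pos hy
  have h1 : En α y ≤ Phi α y := En_le_Phi hα hy0
  have h2 : Phi α y ≤ Phi α 1 := Phi_anti hα (Set.self_mem_Ici) hy hy
  have h3 : 0 ≤ (ud α y)^2 := sq_nonneg _
  have h4 : 0 ≤ (uf α y)^2 := sq_nonneg _
  unfold En at h1
  constructor <;> nlinarith

/-- The main global bounds:  `|√y J(y)| ≤ CP` and `|y^{3/2} J'(y)| ≤ CQ1 y + CQ0`. -/
lemma global_bounds : ∃ CP CQ1 CQ0 : ℝ, 0 ≤ CP ∧ 0 ≤ CQ1 ∧ 0 ≤ CQ0 ∧ ∀ y : ℝ, 0 < y →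
    |Real.sqrt y * Jf α y| ≤ CP ∧ |y * Real.sqrt y * Jd α y| ≤ CQ1 * y + CQ0 := by
  -- bound on the compact region z ∈ [0, 1/4]
  obtain ⟨MA', hMA'⟩ := (isCompact_Icc (a := (0:ℝ)) (b := 1/4)).exists_bound_of_continuousOn
    (fA_cont hα).continuousOn
  obtain ⟨MB', hMB'⟩ := (isCompact_Icc (a := (0:ℝ)) (b := 1/4)).exists_bound_of_continuousOn
    (fB_cont hα).continuousOn
  set MA := max MA' 0 with hMAdef
  set MB := max MB' 0 with hMBdef
  have hMA : ∀ z ∈ Set.Icc (0:ℝ) (1/4), |fA α z| ≤ MA :=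
    fun z hz => le_trans (hMA' z hz) (le_max_left _ _)
  have hMB : ∀ z ∈ Set.Icc (0:ℝ) (1/4), |fB α z| ≤ MB :=
    fun z hz => le_trans (hMB' z hz) (le_max_left _ _)
  have hMA0 : 0 ≤ MA := le_max_right _ _
  have hMB0 : 0 ≤ MB := le_max_right _ _
  set C := Real.sqrt (max (Phi α 1) 0) with hCdef
  have hC0 : 0 ≤ C := Real.sqrt_nonneg _
  have h2α : (0:ℝ) < (2:ℝ) ^ α := Real.rpow_pos_of_pos two_pos α
  set DP := MA / 2 ^ α with hDPdef
  set DQ := (|α| * MA + MB / 2) / 2 ^ α with hDQdef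
  have hDP0 : 0 ≤ DP := by positivity
  have hDQ0 : 0 ≤ DQ := by positivity
  refine ⟨C + DP, 2 * C, DQ, by positivity, by positivity, hDQ0, ?_⟩
  intro y hy
  have hsy : (0:ℝ) < Real.sqrt y := Real.sqrt_pos.mpr hy
  have hzmem : y ^ 2 / 4 ∈ Set.Icc (0:ℝ) (1/4) → True := fun _ => trivial
  rcases le_or_gt y 1 with hy1 | hy1
  · -- small y case
    have hzin : y ^ 2 / 4 ∈ Set.Icc (0:ℝ) (1/4) := by
      constructor
      · positivity
      · nlinarith
    have hfa := hMA _ hzin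
    have hfb := hMB _ hzin
    -- key:  √y * (y/2)^α = y^(α+1/2) / 2^α ≤ 1/2^α
    have hq : (0:ℝ) < (y/2) ^ α := Real.rpow_pos_of_pos (by linarith) α
    have e1 : Real.sqrt y * (y / 2) ^ α = y ^ (α + 1/2 : ℝ) / 2 ^ α := by
      rw [Real.sqrt_eq_rpow, Real.div_rpow hy.le (by norm_num : (0:ℝ) ≤ 2),
        Real.rpow_add hy]
      ring
    have e2 : y ^ (α + 1/2 : ℝ) ≤ 1 :=
      Real.rpow_le_one hy.le hy1 (by linarith)
    have e3 : (0:ℝ) ≤ y ^ (α + 1/2 : ℝ) := (Real.rpow_pos_of_pos hy _).le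
    constructor
    · -- |√y Jf|
      unfold Jf
      rw [abs_mul, abs_mul]
      rw [abs_of_nonneg hsy.le, abs_of_nonneg hq.le, ← mul_assoc, e1]
      have : y ^ (α + 1/2 : ℝ) / 2 ^ α * |fA α (y^2/4)| ≤ 1 / 2 ^ α * MA := by
        apply mul_le_mul (by gcongr) hfa (abs_nonneg _) (by positivity)
      calc y ^ (α + 1/2 : ℝ) / 2 ^ α * |fA α (y^2/4)| ≤ 1 / 2 ^ α * MA := this
        _ = DP := by rw [hDPdef]; ring
        _ ≤ C + DP := by linarith
    · -- |y √y Jd|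
      unfold Jd
      have hbr : |(α / y) * fA α (y ^ 2 / 4) + (y / 2) * fB α (y ^ 2 / 4)|
          ≤ |α| / y * MA + y / 2 * MB := by
        apply le_trans (abs_add_le _ _)
        apply add_le_add
        · rw [abs_mul, abs_div, abs_of_pos hy]
          exact mul_le_mul_of_nonneg_left hfa (by positivity)
        · rw [abs_mul, abs_of_pos (by linarith : (0:ℝ) < y/2)]
          exact mul_le_mul_of_nonneg_left hfb (by positivity)
      rw [abs_mul, abs_mul, abs_mul, abs_of_pos hy, abs_of_pos hsy, abs_of_pos hq]
      calc y * Real.sqrt y * ((y/2)^α * |(α / y) * fA α (y ^ 2 / 4) + (y / 2) * fB α (y ^ 2 / 4)|)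
          ≤ y * Real.sqrt y * ((y/2)^α * (|α| / y * MA + y / 2 * MB)) := by
            apply mul_le_mul_of_nonneg_left _ (by positivity)
            exact mul_le_mul_of_nonneg_left hbr hq.le
        _ = (y ^ (α + 1/2 : ℝ) / 2 ^ α) * (|α| * MA + y^2 / 2 * MB) := by
            rw [← e1]; field_simp
        _ ≤ (1 / 2 ^ α) * (|α| * MA + MB / 2) := by
            apply mul_le_mul
            · gcongr
            · have : y^2 ≤ 1 := by nlinarith
              nlinarith
            · positivity
            · positivity
        _ = DQ := by rw [hDQdef]; ring
        _ ≤ 2 * C * y + DQ := by nlinarith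
  · -- large y case
    have hyge : (1:ℝ) ≤ y := hy1.le
    obtain ⟨h1, h2⟩ := energy_bound hα hyge
    have hmax : 0 ≤ max (Phi α 1) 0 := le_max_right _ _
    have hub : |uf α y| ≤ C := by
      rw [hCdef, ← Real.sqrt_sq_eq_abs]
      apply Real.sqrt_le_sqrt
      exact le_trans h1 (le_max_left _ _)
    have hud : |ud α y| ≤ C := by
      rw [hCdef, ← Real.sqrt_sq_eq_abs]
      apply Real.sqrt_le_sqrt
      exact le_trans h2 (le_max_left _ _)
    constructor
    · exact le_trans hub (by linarith)
    · -- √y Jd = ud - 1/(2√y) Jf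
      have hrel : Real.sqrt y * Jd α y = ud α y - 1 / (2 * Real.sqrt y) * Jf α y := by
        unfold ud; ring
      have hJf : |Jf α y| = |uf α y| / Real.sqrt y := by
        unfold uf
        rw [abs_mul, abs_of_pos hsy]
        field_simp
      have hsy1 : (1:ℝ) ≤ Real.sqrt y := by
        rw [show (1:ℝ) = Real.sqrt 1 by simp]
        exact Real.sqrt_le_sqrt hyge
      have hsmall : |1 / (2 * Real.sqrt y) * Jf α y| ≤ C := by
        rw [abs_mul, hJf]
        rw [abs_of_pos (by positivity : (0:ℝ) < 1 / (2 * Real.sqrt y))]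
        have : 1 / (2 * Real.sqrt y) * (|uf α y| / Real.sqrt y) = |uf α y| / (2 * y) := by
          rw [div_mul_div_comm]
          congr 1
          · ring
          · rw [mul_assoc, Real.mul_self_sqrt hy.le]
        rw [this]
        calc |uf α y| / (2 * y) ≤ C / (2 * y) := by gcongr
          _ ≤ C := by
            rw [div_le_iff₀ (by linarith)]
            nlinarith
      have : |Real.sqrt y * Jd α y| ≤ 2 * C := by
        rw [hrel]
        calc |ud α y - 1 / (2 * Real.sqrt y) * Jf α y|
            ≤ |ud α y| + |1 / (2 * Real.sqrt y) * Jf α y| := abs_sub _ _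
          _ ≤ C + C := add_le_add hud hsmall
          _ = 2 * C := by ring
      calc |y * Real.sqrt y * Jd α y| = y * |Real.sqrt y * Jd α y| := by
            rw [mul_assoc, abs_mul, abs_of_pos hy]
        _ ≤ y * (2 * C) := mul_le_mul_of_nonneg_left this hy.le
        _ ≤ 2 * C * y + DQ := by linarith [hDQ0, mul_comm y (2*C)]
end

end
section


variable {α : ℝ} (hα : -(1 / 2 : ℝ) < α)


section
variable {t x : ℝ} (ht : 0 < t) (hx : 0 < x)

/-- The Wronskian-type function. -/
noncomputable def Wf (α t x : ℝ) (s : ℝ) : ℝ :=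
  s * (t * Jd α (t * s) * Jf α (x * s) - x * Jf α (t * s) * Jd α (x * s))

include hα ht hx

lemma Wf_hasDeriv {s : ℝ} (hs : 0 < s) :
    HasDerivAt (Wf α t x) ((x ^ 2 - t ^ 2) * (s * Jf α (t * s) * Jf α (x * s))) s := by
  have hts : 0 < t * s := by positivity
  have hxs : 0 < x * s := by positivity
  have h_t : HasDerivAt (fun s : ℝ => t * s) t s := by
    simpa using (hasDerivAt_id s).const_mul t
  have h_x : HasDerivAt (fun s : ℝ => x * s) x s := by
    simpa using (hasDerivAt_id s).const_mul x
  have hJf_t : HasDerivAt (fun s => Jf α (t * s)) (Jd α (t * s) * t) s :=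
    (Jf_hasDeriv hα hts).comp s h_t
  have hJf_x : HasDerivAt (fun s => Jf α (x * s)) (Jd α (x * s) * x) s :=
    (Jf_hasDeriv hα hxs).comp s h_x
  have hJd_t : HasDerivAt (fun s => Jd α (t * s)) (Jd2 α (t * s) * t) s :=
    (Jd_hasDeriv hα hts).comp s h_t
  have hJd_x : HasDerivAt (fun s => Jd α (x * s)) (Jd2 α (x * s) * x) s :=
    (Jd_hasDeriv hα hxs).comp s h_x
  have hprod1 := (hJd_t.const_mul t).mul hJf_x
  have hprod2 := (hJf_t.const_mul x).mul hJd_x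
  have hdiff := hprod1.sub hprod2
  have hW := (hasDerivAt_id s).mul hdiff
  simp only [id_eq, one_mul] at hW
  refine hW.congr_deriv ?_
  simp only [Pi.sub_apply, Pi.mul_apply]
  -- now prove the value equality using the ODE at t*s and x*s
  have hODEt := bessel_ODE hα hts
  have hODEx := bessel_ODE hα hxs
  have hC1 : Jd2 α (t * s) =
      (-((t*s) * Jd α (t*s)) - ((t*s)^2 - α^2) * Jf α (t*s)) / (t*s)^2 := by
    field_simp at hODEt ⊢
    linarith
  have hC2 : Jd2 α (x * s) =
      (-((x*s) * Jd α (x*s)) - ((x*s)^2 - α^2) * Jf α (x*s)) / (x*s)^2 := by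
    field_simp at hODEx ⊢
    linarith
  rw [hC1, hC2]
  field_simp
  ring

omit ht hx in
lemma Jf_contAt {y : ℝ} (hy : 0 < y) : ContinuousAt (Jf α) y :=
  (Jf_hasDeriv hα hy).continuousAt

/-- The exact alternative formula for `Wf` (leading terms cancel). -/
lemma Wf_eq_V {s : ℝ} (hs : 0 < s) :
    Wf α t x s = s ^ 2 / 2 * ((t * s / 2) ^ α * ((x * s / 2) ^ α)) *
      (t ^ 2 * fB α ((t * s) ^ 2 / 4) * fA α ((x * s) ^ 2 / 4)
        - x ^ 2 * fB α ((x * s) ^ 2 / 4) * fA α ((t * s) ^ 2 / 4)) := by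
  unfold Wf Jf Jd
  have hts : (0:ℝ) < t * s := by positivity
  have hxs : (0:ℝ) < x * s := by positivity
  field_simp
  ring

lemma V_tendsto_zero :
    Tendsto (Wf α t x) (nhdsWithin 0 (Set.Ioi 0)) (nhds 0) := by
  have heq : ∀ s ∈ Set.Ioi (0:ℝ), ((t/2) ^ α * ((x/2) ^ α) / 2) * s ^ (2*α + 2 : ℝ) *
      (t ^ 2 * fB α ((t * s) ^ 2 / 4) * fA α ((x * s) ^ 2 / 4)
        - x ^ 2 * fB α ((x * s) ^ 2 / 4) * fA α ((t * s) ^ 2 / 4)) = Wf α t x s := by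
    intro s hs
    rw [Wf_eq_V hα ht hx hs]
    have hs0 : (0:ℝ) < s := hs
    have e1 : (t * s / 2 : ℝ) ^ α = (t/2) ^ α * s ^ α := by
      rw [show (t * s / 2 : ℝ) = (t/2) * s by ring,
        Real.mul_rpow (by positivity) hs0.le]
    have e2 : (x * s / 2 : ℝ) ^ α = (x/2) ^ α * s ^ α := by
      rw [show (x * s / 2 : ℝ) = (x/2) * s by ring,
        Real.mul_rpow (by positivity) hs0.le]
    have e3 : s ^ (2*α + 2 : ℝ) = s ^ α * s ^ α * s ^ 2 := by
      rw [show (2*α + 2 : ℝ) = α + α + (2:ℕ) by push_cast; ring]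
      rw [Real.rpow_add hs0, Real.rpow_add hs0, Real.rpow_natCast]
    rw [e1, e2, e3]
    ring
  have h1 : Tendsto (fun s : ℝ => s ^ (2*α + 2 : ℝ)) (nhdsWithin 0 (Set.Ioi 0)) (nhds 0) := by
    have hc : ContinuousAt (fun s : ℝ => s ^ (2*α + 2 : ℝ)) 0 := by
      apply Real.continuousAt_rpow_const
      right; linarith
    have := hc.continuousWithinAt (s := Set.Ioi (0:ℝ))
    have h0 : (0:ℝ) ^ (2*α + 2 : ℝ) = 0 := by
      rw [Real.zero_rpow]; linarith
    rw [ContinuousWithinAt, h0] at this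
    exact this
  have h2c : Continuous (fun s : ℝ =>
      t ^ 2 * fB α ((t * s) ^ 2 / 4) * fA α ((x * s) ^ 2 / 4)
        - x ^ 2 * fB α ((x * s) ^ 2 / 4) * fA α ((t * s) ^ 2 / 4)) := by
    apply Continuous.sub
    · exact (continuous_const.mul ((fB_cont hα).comp (by continuity))).mul
        ((fA_cont hα).comp (by continuity))
    · exact (continuous_const.mul ((fB_cont hα).comp (by continuity))).mul
        ((fA_cont hα).comp (by continuity))
  have htot := (((tendsto_const_nhds (x := (t/2) ^ α * ((x/2) ^ α) / 2)
      (f := nhdsWithin (0:ℝ) (Set.Ioi 0)))).mul h1).mul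
      (h2c.continuousAt.continuousWithinAt)
  rw [mul_zero, zero_mul] at htot
  apply htot.congr'
  filter_upwards [self_mem_nhdsWithin] with s hs
  exact heq s hs

/-- Extension of `Wf` by 0 at the origin. -/
noncomputable def Wex (α t x : ℝ) (s : ℝ) : ℝ := if s = 0 then 0 else Wf α t x s

lemma Wex_cont : ContinuousOn (Wex α t x) (Set.Icc 0 1) := by
  intro s hs
  rcases eq_or_ne s 0 with rfl | hs0
  · have h0 : Wex α t x 0 = 0 := by simp [Wex]
    unfold ContinuousWithinAt
    rw [h0]
    have hsub : Set.Icc (0:ℝ) 1 ⊆ insert 0 (Set.Ioi 0) := by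
      intro y hy
      rcases eq_or_lt_of_le hy.1 with h | h
      · exact Set.mem_insert_iff.mpr (Or.inl h.symm)
      · exact Set.mem_insert_iff.mpr (Or.inr h)
    apply Tendsto.mono_left _ (nhdsWithin_mono 0 hsub)
    rw [nhdsWithin_insert, tendsto_sup]
    constructor
    · rw [tendsto_pure_left]
      intro U hU
      simpa [h0] using mem_of_mem_nhds hU
    · apply (V_tendsto_zero hα ht hx).congr'
      filter_upwards [self_mem_nhdsWithin] with y hy
      have hyne : y ≠ 0 := ne_of_gt hy
      simp [Wex, hyne]
  · have hspos : 0 < s := lt_of_le_of_ne hs.1 (Ne.symm hs0)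
    have hW : ContinuousAt (Wf α t x) s := by
      have h1 : ContinuousAt (fun s => Jf α (t * s)) s :=
        (Jf_contAt hα (by positivity)).comp ((continuous_const.mul continuous_id).continuousAt)
      have h2 : ContinuousAt (fun s => Jf α (x * s)) s :=
        (Jf_contAt hα (by positivity)).comp ((continuous_const.mul continuous_id).continuousAt)
      have h3 : ContinuousAt (fun s => Jd α (t * s)) s :=
        ((Jd_hasDeriv hα (show (0:ℝ) < t * s by positivity)).continuousAt).comp
          ((continuous_const.mul continuous_id).continuousAt)
      have h4 : ContinuousAt (fun s => Jd α (x * s)) s :=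
        ((Jd_hasDeriv hα (show (0:ℝ) < x * s by positivity)).continuousAt).comp
          ((continuous_const.mul continuous_id).continuousAt)
      unfold Wf
      exact continuousAt_id.mul
        (((continuousAt_const.mul h3).mul h2).sub ((continuousAt_const.mul h1).mul h4))
    have hev : Wex α t x =ᶠ[nhds s] Wf α t x := by
      filter_upwards [eventually_ne_nhds hs0] with y hy
      simp [Wex, hy]
    exact (hW.congr hev.symm).continuousWithinAt

lemma Wex_deriv {s : ℝ} (hs : s ∈ Set.Ioo (0:ℝ) 1) :
    HasDerivWithinAt (Wex α t x)
      ((x ^ 2 - t ^ 2) * (s * Jf α (t * s) * Jf α (x * s))) (Set.Ioi s) s := by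
  have hs0 : 0 < s := hs.1
  have hev : Wex α t x =ᶠ[nhds s] Wf α t x := by
    filter_upwards [eventually_ne_nhds (ne_of_gt hs0)] with y hy
    simp [Wex, hy]
  exact (((Wf_hasDeriv hα ht hx hs0)).congr_of_eventuallyEq hev).hasDerivWithinAt

lemma Jprod_contOn : ContinuousOn
    (fun s : ℝ => s * Jf α (t * s) * Jf α (x * s)) (Set.Ioc 0 1) := by
  intro s hs
  have hs0 : 0 < s := hs.1
  have h1 : ContinuousAt (fun s => Jf α (t * s)) s :=
    (Jf_contAt hα (by positivity)).comp ((continuous_const.mul continuous_id).continuousAt)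
  have h2 : ContinuousAt (fun s => Jf α (x * s)) s :=
    (Jf_contAt hα (by positivity)).comp ((continuous_const.mul continuous_id).continuousAt)
  exact ((continuousAt_id.mul h1).mul h2).continuousWithinAt

lemma Jprod_bound {CP : ℝ} (hCP0 : 0 ≤ CP)
    (hbnd : ∀ y : ℝ, 0 < y → |Real.sqrt y * Jf α y| ≤ CP)
    {s : ℝ} (hs : s ∈ Set.Ioc (0:ℝ) 1) :
    |s * Jf α (t * s) * Jf α (x * s)| ≤ CP ^ 2 / Real.sqrt (t * x) := by
  have hs0 : 0 < s := hs.1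
  have hts : (0:ℝ) < t * s := by positivity
  have hxs : (0:ℝ) < x * s := by positivity
  have htx : (0:ℝ) < t * x := by positivity
  have hstx : (0:ℝ) < Real.sqrt (t * x) := Real.sqrt_pos.mpr htx
  have e : Real.sqrt (t * s) * Real.sqrt (x * s) = Real.sqrt (t * x) * s := by
    rw [← Real.sqrt_mul hts.le, show (t*s)*(x*s) = (t*x)*s^2 by ring,
      Real.sqrt_mul htx.le, Real.sqrt_sq hs0.le]
  have h1 := hbnd _ hts
  have h2 := hbnd _ hxs
  have hst : (0:ℝ) < Real.sqrt (t * s) := Real.sqrt_pos.mpr hts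
  have hsx : (0:ℝ) < Real.sqrt (x * s) := Real.sqrt_pos.mpr hxs
  have hJt : |Jf α (t * s)| ≤ CP / Real.sqrt (t * s) := by
    rw [le_div_iff₀ hst, mul_comm]
    rw [abs_mul, abs_of_pos hst] at h1
    exact h1
  have hJx : |Jf α (x * s)| ≤ CP / Real.sqrt (x * s) := by
    rw [le_div_iff₀ hsx, mul_comm]
    rw [abs_mul, abs_of_pos hsx] at h2
    exact h2
  calc |s * Jf α (t * s) * Jf α (x * s)|
      = s * |Jf α (t * s)| * |Jf α (x * s)| := by
        rw [abs_mul, abs_mul, abs_of_pos hs0]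
    _ ≤ s * (CP / Real.sqrt (t * s)) * (CP / Real.sqrt (x * s)) := by
        apply mul_le_mul _ hJx (abs_nonneg _) (by positivity)
        exact mul_le_mul_of_nonneg_left hJt hs0.le
    _ = CP ^ 2 * (s / (Real.sqrt (t * s) * Real.sqrt (x * s))) := by ring
    _ = CP ^ 2 / Real.sqrt (t * x) := by
        rw [e]
        rw [show Real.sqrt (t*x) * s = s * Real.sqrt (t*x) by ring, ← div_div,
          div_self (ne_of_gt hs0), one_div, div_eq_mul_inv]

lemma Jprod_integrable {CP : ℝ} (hCP0 : 0 ≤ CP)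
    (hbnd : ∀ y : ℝ, 0 < y → |Real.sqrt y * Jf α y| ≤ CP) :
    IntervalIntegrable (fun s : ℝ => (x ^ 2 - t ^ 2) * (s * Jf α (t * s) * Jf α (x * s)))
      volume 0 1 := by
  rw [intervalIntegrable_iff_integrableOn_Ioc_of_le (by norm_num : (0:ℝ) ≤ 1)]
  apply Integrable.mono' (g := fun _ : ℝ => |x ^ 2 - t ^ 2| * (CP ^ 2 / Real.sqrt (t * x)))
  · exact integrableOn_const measure_Ioc_lt_top.ne
  · exact (ContinuousOn.aestronglyMeasurable
      ((continuousOn_const).mul (Jprod_contOn hα ht hx)) measurableSet_Ioc)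
  · rw [ae_restrict_iff' measurableSet_Ioc]
    apply ae_of_all
    intro s hs
    rw [Real.norm_eq_abs, abs_mul]
    exact mul_le_mul_of_nonneg_left (Jprod_bound hα ht hx hCP0 hbnd hs) (abs_nonneg _)

lemma integral_eq_W1 {CP : ℝ} (hCP0 : 0 ≤ CP)
    (hbnd : ∀ y : ℝ, 0 < y → |Real.sqrt y * Jf α y| ≤ CP) :
    ∫ s in (0:ℝ)..1, (x ^ 2 - t ^ 2) * (s * Jf α (t * s) * Jf α (x * s))
      = t * Jd α t * Jf α x - x * Jf α t * Jd α x := by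
  have h := intervalIntegral.integral_eq_sub_of_hasDeriv_right_of_le (a := (0:ℝ)) (b := 1)
    (by norm_num) (Wex_cont hα ht hx) (fun s hs => Wex_deriv hα ht hx hs)
    (Jprod_integrable hα ht hx hCP0 hbnd)
  rw [h]
  have h1 : Wex α t x 1 = Wf α t x 1 := by simp [Wex]
  have h0 : Wex α t x 0 = 0 := by simp [Wex]
  rw [h1, h0, sub_zero]
  unfold Wf
  simp [mul_one]

/-- The Christoffel–Darboux style formula for the kernel. -/
lemma Rker_formula (htx : t ≠ x) :
    Rker α t x = Real.sqrt (t * x) *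
      ((t * Jd α t * Jf α x - x * Jf α t * Jd α x) / (x ^ 2 - t ^ 2)) := by
  obtain ⟨CP, CQ1, CQ0, hCP0, _, _, hbnd⟩ := global_bounds hα
  have hbnd' : ∀ y : ℝ, 0 < y → |Real.sqrt y * Jf α y| ≤ CP := fun y hy => (hbnd y hy).1
  have hD : x ^ 2 - t ^ 2 ≠ 0 := by
    intro h
    have h2 : x ^ 2 = t ^ 2 := by linarith
    have : x = t := by nlinarith
    exact htx this.symm
  unfold Rker kernelW
  rw [integral_Icc_eq_integral_Ioc]
  have hcongr : ∀ s ∈ Set.Ioc (0:ℝ) 1,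
      besselJ α (t * s) * besselJ α (x * s) * Real.sqrt (t * x) * s
        = Real.sqrt (t * x) * (s * Jf α (t * s) * Jf α (x * s)) := by
    intro s hs
    have hs0 : 0 < s := hs.1
    rw [besselJ_eq hα (show (0:ℝ) < t * s by positivity),
      besselJ_eq hα (show (0:ℝ) < x * s by positivity)]
    ring
  rw [setIntegral_congr_fun measurableSet_Ioc hcongr]
  rw [MeasureTheory.integral_const_mul]
  congr 1
  -- ∫ over Ioc equals the interval integral
  have hIoc : ∫ s in Set.Ioc (0:ℝ) 1, (s * Jf α (t * s) * Jf α (x * s))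
      = ∫ s in (0:ℝ)..1, (s * Jf α (t * s) * Jf α (x * s)) :=
    (intervalIntegral.integral_of_le (by norm_num)).symm
  rw [hIoc, eq_div_iff hD, mul_comm, ← intervalIntegral.integral_const_mul]
  exact integral_eq_W1 hα ht hx hCP0 hbnd'

end

end

end BesselAux


open BesselAux

/-- Pointwise off-diagonal bound for the squared reproducing kernel. -/
theorem Rker_sq_pointwise_bound (α : ℝ) (hα : -(1 / 2 : ℝ) < α) :
    ∃ K K' : ℝ, ∀ t x : ℝ, 0 < t → 0 < x → t ≠ x →
      Rker α t x ^ 2 ≤ K / (x - t) ^ 2 + K' / (x ^ 2 - t ^ 2) ^ 2 := by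
  obtain ⟨CP, CQ1, CQ0, hCP0, hCQ10, hCQ00, hbnd⟩ := global_bounds hα
  set A := CP * CQ1 with hA
  set B := 2 * (CP * CQ0) with hB
  have hA0 : 0 ≤ A := by positivity
  have hB0 : 0 ≤ B := by positivity
  refine ⟨2 * A ^ 2, 2 * B ^ 2, ?_⟩
  intro t x ht hx htx
  have hD : x ^ 2 - t ^ 2 ≠ 0 := by
    intro h
    have h2 : x ^ 2 = t ^ 2 := by linarith
    have : x = t := by nlinarith
    exact htx this.symm
  have hDpos : 0 < (x ^ 2 - t ^ 2) ^ 2 := by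
    have h1 : 0 < |x ^ 2 - t ^ 2| := abs_pos.mpr hD
    nlinarith [sq_abs (x ^ 2 - t ^ 2)]
  have hform := Rker_formula hα ht hx htx
  set W1 := t * Jd α t * Jf α x - x * Jf α t * Jd α x with hW1
  -- bound the numerator
  have hN : |Real.sqrt (t * x) * W1| ≤ A * (t + x) + B := by
    have hst : 0 < Real.sqrt t := Real.sqrt_pos.mpr ht
    have hsx : 0 < Real.sqrt x := Real.sqrt_pos.mpr hx
    have hsqrt : Real.sqrt (t * x) = Real.sqrt t * Real.sqrt x := Real.sqrt_mul ht.le x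
    have hb_t := hbnd t ht
    have hb_x := hbnd x hx
    have h1 : |Real.sqrt (t * x) * (t * Jd α t * Jf α x)|
        ≤ (CQ1 * t + CQ0) * CP := by
      have e : Real.sqrt (t * x) * (t * Jd α t * Jf α x)
          = (t * Real.sqrt t * Jd α t) * (Real.sqrt x * Jf α x) := by
        rw [hsqrt]; ring
      rw [e, abs_mul]
      apply mul_le_mul hb_t.2 hb_x.1 (abs_nonneg _) (by positivity)
    have h2 : |Real.sqrt (t * x) * (x * Jf α t * Jd α x)|
        ≤ (CQ1 * x + CQ0) * CP := by
      have e : Real.sqrt (t * x) * (x * Jf α t * Jd α x)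
          = (x * Real.sqrt x * Jd α x) * (Real.sqrt t * Jf α t) := by
        rw [hsqrt]; ring
      rw [e, abs_mul]
      apply mul_le_mul hb_x.2 hb_t.1 (abs_nonneg _) (by positivity)
    have e2 : Real.sqrt (t * x) * W1 = Real.sqrt (t * x) * (t * Jd α t * Jf α x)
        - Real.sqrt (t * x) * (x * Jf α t * Jd α x) := by rw [hW1]; ring
    calc |Real.sqrt (t * x) * W1|
        ≤ |Real.sqrt (t * x) * (t * Jd α t * Jf α x)|
          + |Real.sqrt (t * x) * (x * Jf α t * Jd α x)| := by
          rw [e2]; exact abs_sub _ _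
      _ ≤ (CQ1 * t + CQ0) * CP + (CQ1 * x + CQ0) * CP := add_le_add h1 h2
      _ = A * (t + x) + B := by rw [hA, hB]; ring
  -- final computation
  have hLHS : Rker α t x ^ 2 = (Real.sqrt (t * x) * W1) ^ 2 / (x ^ 2 - t ^ 2) ^ 2 := by
    rw [hform, ← mul_div_assoc, div_pow]
  have hRHS : 2 * A ^ 2 / (x - t) ^ 2 + 2 * B ^ 2 / (x ^ 2 - t ^ 2) ^ 2
      = (2 * A ^ 2 * (x + t) ^ 2 + 2 * B ^ 2) / (x ^ 2 - t ^ 2) ^ 2 := by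
    have hxt : x - t ≠ 0 := sub_ne_zero.mpr (Ne.symm htx)
    have hxpt : x + t ≠ 0 := by positivity
    rw [show (x ^ 2 - t ^ 2) = (x - t) * (x + t) by ring]
    field_simp
  rw [hLHS, hRHS, div_le_div_iff₀ hDpos hDpos]
  have hnum : (Real.sqrt (t * x) * W1) ^ 2 ≤ 2 * A ^ 2 * (x + t) ^ 2 + 2 * B ^ 2 := by
    have habs : (Real.sqrt (t * x) * W1) ^ 2 ≤ (A * (t + x) + B) ^ 2 := by
      have := pow_le_pow_left₀ (abs_nonneg _) hN 2
      rwa [sq_abs] at this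
    nlinarith [sq_nonneg (A * (t + x) - B)]
  nlinarith [hDpos, hnum]
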